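/- Let T₁', T₁, T₂', T₂ be categories. Let u : T₁' ⥤ T₂' and v : T₁ ⥤ T₂ be functors admitting right adjoints u_* and v_* respectively, let f_* : T₁' ⥤ T₁ and g_* : T₂' ⥤ T₂ be conservative functors admitting left adjoints f^* and g^* respectively, and let α : g_* ∘ u ≅ v ∘ f_* be a natural isomorphism whose associated mate (Beck–Chevalley transformation) g^* ∘ v ⟶ u ∘ f^* is a natural isomorphism. If v is an equivalence of categories, then u is an equivalence of categories. -/

import Mathlib

/-!
STATEMENT 1: Given a square of functors `u : T₁' ⥤ T₂'`, `v : T₁ ⥤ T₂` (with right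
adjoints `u_*`, `v_*`), conservative functors `f_* : T₁' ⥤ T₁`, `g_* : T₂' ⥤ T₂`
(with left adjoints `f^*`, `g^*`), and a natural isomorphism `α : g_* ∘ u ≅ v ∘ f_*`
whose mate (Beck–Chevalley transformation) `g^* ∘ v ⟶ u ∘ f^*` is an isomorphism:
if `v` is an equivalence, then `u` is an equivalence.
-/

open CategoryTheory

theorem equivalence_of_rightAdjointable_square
    {T₁' T₁ T₂' T₂ : Type*}
    [Category T₁'] [Category T₁] [Category T₂'] [Category T₂]
    (u : T₁' ⥤ T₂') (us : T₂' ⥤ T₁') (adj_u : u ⊣ us)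
    (v : T₁ ⥤ T₂) (vs : T₂ ⥤ T₁) (adj_v : v ⊣ vs)
    (fs : T₁' ⥤ T₁) (fstar : T₁ ⥤ T₁') (adj_f : fstar ⊣ fs)
    (gs : T₂' ⥤ T₂) (gstar : T₂ ⥤ T₂') (adj_g : gstar ⊣ gs)
    [fs.ReflectsIsomorphisms] [gs.ReflectsIsomorphisms]
    (α : u ⋙ gs ≅ fs ⋙ v)
    (hmate : IsIso ((mateEquiv adj_f adj_g).symm α.inv))
    (hv : v.IsEquivalence) :
    u.IsEquivalence := by
  haveI := hv
  haveI : vs.IsEquivalence := adj_v.isEquivalence_right_of_isEquivalence_left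
  set β := (mateEquiv adj_f adj_g).symm α.inv with hβ
  haveI : IsIso β := hmate
  set γ := mateEquiv adj_u adj_v α.inv with hγdef
  have key : γ = conjugateEquiv (adj_f.comp adj_u) (adj_v.comp adj_g) β := by
    rw [hγdef]
    conv_lhs => rw [← (mateEquiv adj_f adj_g).apply_symm_apply α.inv]
    exact iterated_mateEquiv_conjugateEquiv adj_f adj_g adj_v adj_u β
  haveI : IsIso γ := by
    rw [key]
    exact inferInstanceAs
      (IsIso (conjugateIsoEquiv (adj_f.comp adj_u) (adj_v.comp adj_g) (asIso β)).hom)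
  haveI : ∀ Y, IsIso (γ.app Y) := fun Y =>
    NatIso.isIso_app_of_isIso (γ : us ⋙ fs ⟶ gs ⋙ vs) Y
  -- counit of adj_u is an isomorphism
  have hcounit : ∀ Y : T₂', IsIso (adj_u.counit.app Y) := by
    intro Y
    have h1 : γ.app Y = adj_v.unit.app (fs.obj (us.obj Y)) ≫
        vs.map (α.inv.app (us.obj Y)) ≫ vs.map (gs.map (adj_u.counit.app Y)) := by
      simp [hγdef, mateEquiv]
    have h2 : vs.map (gs.map (adj_u.counit.app Y)) =
        inv (vs.map (α.inv.app (us.obj Y))) ≫ inv (adj_v.unit.app (fs.obj (us.obj Y))) ≫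
          γ.app Y := by
      rw [h1]; simp
    haveI : IsIso (vs.map (gs.map (adj_u.counit.app Y))) := by rw [h2]; infer_instance
    haveI : IsIso (gs.map (adj_u.counit.app Y)) := isIso_of_reflects_iso _ vs
    exact isIso_of_reflects_iso _ gs
  -- unit of adj_u is an isomorphism
  have hunit : ∀ X : T₁', IsIso (adj_u.unit.app X) := by
    intro X
    have h3 : α.inv.app X = v.map (fs.map (adj_u.unit.app X)) ≫
        v.map (γ.app (u.obj X)) ≫ adj_v.counit.app (gs.obj (u.obj X)) := by
      conv_lhs => rw [← (mateEquiv adj_u adj_v).symm_apply_apply α.inv]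
      simp [mateEquiv, hγdef]
    have h4 : v.map (fs.map (adj_u.unit.app X)) =
        α.inv.app X ≫ inv (adj_v.counit.app (gs.obj (u.obj X))) ≫
          inv (v.map (γ.app (u.obj X))) := by
      rw [h3]; simp
    haveI : IsIso (v.map (fs.map (adj_u.unit.app X))) := by rw [h4]; infer_instance
    haveI : IsIso (fs.map (adj_u.unit.app X)) := isIso_of_reflects_iso _ v
    exact isIso_of_reflects_iso _ fs
  haveI := hunit
  haveI := hcounit
  exact adj_u.toEquivalence.isEquivalence_functor
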